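/- Let I ⊆ [0,1] be a set of real numbers. Then D(D(I)) = D(I) ∪ {1}. -/

import Mathlib

open Finset in
/-- `I_+`: sums `∑ nᵢ aᵢ ≤ 1` with `aᵢ ∈ I`, `nᵢ` positive integers, together with `0`. -/
def Iplus (I : Set ℝ) : Set ℝ :=
  {x : ℝ | x ≤ 1 ∧ ∃ (r : ℕ), 0 < r ∧ ∃ (a : Fin r → ℝ) (n : Fin r → ℕ),
    (∀ i, a i ∈ I) ∧ (∀ i, 0 < n i) ∧ x = ∑ i, (n i : ℝ) * a i} ∪ {0}

/-- `D(I) = {(m-1+f)/m ≤ 1 : m ∈ ℕ₊, f ∈ I_+}`. -/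
def Dset (I : Set ℝ) : Set ℝ :=
  {x : ℝ | ∃ (m : ℕ) (f : ℝ), 0 < m ∧ f ∈ Iplus I ∧ x = ((m : ℝ) - 1 + f) / m} ∩ Set.Iic 1

/-- `D_c(I) = {(m-1+f+kc)/m ≤ 1 : m, k ∈ ℕ₊, f ∈ I_+}`. -/
def Dc (c : ℝ) (I : Set ℝ) : Set ℝ :=
  {x : ℝ | ∃ (m k : ℕ) (f : ℝ), 0 < m ∧ 0 < k ∧ f ∈ Iplus I ∧
    x = ((m : ℝ) - 1 + f + (k : ℝ) * c) / m} ∩ Set.Iic 1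

lemma mem_Iplus_iff (I : Set ℝ) (x : ℝ) :
    x ∈ Iplus I ↔ x ≤ 1 ∧ x ∈ AddSubmonoid.closure I := by
  constructor
  · rintro (⟨hx1, r, hr, a, n, ha, hn, rfl⟩ | h)
    · refine ⟨hx1, AddSubmonoid.sum_mem _ fun i _ => ?_⟩
      simpa [nsmul_eq_mul] using
        AddSubmonoid.nsmul_mem _ (AddSubmonoid.subset_closure (ha i)) (n i)
    · simp only [Set.mem_singleton_iff] at h
      subst h
      exact ⟨zero_le_one, zero_mem _⟩
  · rintro ⟨hx1, hx⟩
    obtain ⟨l, hl, rfl⟩ := AddSubmonoid.exists_list_of_mem_closure hx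
    match l with
    | [] => right; simp
    | (b :: t) =>
      left
      refine ⟨hx1, (b :: t).length, by simp, fun i => (b :: t).get i, fun _ => 1,
        fun i => hl _ (List.get_mem (b :: t) i), fun _ => one_pos, ?_⟩
      simpa using (show ∑ i, (b :: t).get i = (b :: t).sum by rw [← List.sum_ofFn, List.ofFn_get]).symm

lemma closure_nonneg {I : Set ℝ} (hI : I ⊆ Set.Icc 0 1) {x : ℝ}
    (hx : x ∈ AddSubmonoid.closure I) : 0 ≤ x := by
  induction hx using AddSubmonoid.closure_induction with
  | mem y hy => exact (hI hy).1
  | zero => exact le_refl 0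
  | add a b _ _ ha hb => exact add_nonneg ha hb

lemma Iplus_subset {I : Set ℝ} (hI : I ⊆ Set.Icc 0 1) : Iplus I ⊆ Set.Icc 0 1 := by
  intro x hx
  rw [mem_Iplus_iff] at hx
  exact ⟨closure_nonneg hI hx.2, hx.1⟩

lemma Dset_subset {I : Set ℝ} (hI : I ⊆ Set.Icc 0 1) : Dset I ⊆ Set.Icc 0 1 := by
  rintro x ⟨⟨m, f, hm, hf, rfl⟩, hx1⟩
  refine ⟨?_, hx1⟩
  have hm1 : (1 : ℝ) ≤ (m : ℝ) := by exact_mod_cast hm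
  have hf0 : 0 ≤ f := (Iplus_subset hI hf).1
  apply div_nonneg <;> linarith

lemma DsetListSum {I : Set ℝ} (hI : I ⊆ Set.Icc 0 1) :
    ∀ l : List ℝ, (∀ d ∈ l, d ∈ Dset I) → l.sum ≤ 1 → l.sum ∈ Dset I ∨ l.sum = 1 := by
  intro l
  induction l with
  | nil =>
    intro _ _
    left
    refine ⟨⟨1, 0, one_pos, Or.inr rfl, by norm_num⟩, by simp⟩
  | cons d t ih =>
    intro hmem hsum
    simp only [List.sum_cons] at hsum ⊢
    have hd := hmem d List.mem_cons_self
    obtain ⟨⟨m, f, hm, hf, hdval⟩, hd1⟩ := hd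
    have hm1 : (1 : ℝ) ≤ (m : ℝ) := by exact_mod_cast hm
    have hf01 := Iplus_subset hI hf
    have hfc := (mem_Iplus_iff I f).1 hf
    have hd0 : 0 ≤ d := by
      rw [hdval]; apply div_nonneg <;> linarith [hf01.1]
    have hS0 : 0 ≤ t.sum :=
      List.sum_nonneg fun x hx => (Dset_subset hI (hmem x (List.mem_cons_of_mem d hx))).1
    have hS1 : t.sum ≤ 1 := by linarith
    rcases ih (fun x hx => hmem x (List.mem_cons_of_mem d hx)) hS1 with hS | hS
    · -- t.sum ∈ Dset I
      obtain ⟨⟨M, g, hM, hg, hSval⟩, hSle⟩ := hS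
      have hM1 : (1 : ℝ) ≤ (M : ℝ) := by exact_mod_cast hM
      have hg01 := Iplus_subset hI hg
      have hgc := (mem_Iplus_iff I g).1 hg
      rcases eq_or_lt_of_le (show 1 ≤ m from hm) with hm' | hm2
      · -- m = 1, d = f
        have hmr : (m : ℝ) = 1 := by exact_mod_cast hm'.symm
        have hdf : d = f := by rw [hdval, hmr]; ring
        left
        refine ⟨⟨M, (M : ℝ) * f + g, hM, ?_, ?_⟩, Set.mem_Iic.2 hsum⟩
        · rw [mem_Iplus_iff]
          constructor
          · have : d + t.sum = ((M : ℝ) - 1 + ((M : ℝ) * f + g)) / M := by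
              rw [hdf, hSval]; field_simp; ring
            rw [this] at hsum
            rw [div_le_one (by linarith)] at hsum
            linarith
          · have : (M : ℝ) * f = M • f := by simp
            rw [this]
            exact add_mem (AddSubmonoid.nsmul_mem _ hfc.2 M) hgc.2
        · rw [hdf, hSval]; field_simp; ring
      · rcases eq_or_lt_of_le (show 1 ≤ M from hM) with hM' | hM2
        · -- M = 1, t.sum = g
          have hMr : (M : ℝ) = 1 := by exact_mod_cast hM'.symm
          have hSg : t.sum = g := by rw [hSval, hMr]; ring
          left
          refine ⟨⟨m, f + (m : ℝ) * g, hm, ?_, ?_⟩, Set.mem_Iic.2 hsum⟩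
          · rw [mem_Iplus_iff]
            constructor
            · have : d + t.sum = ((m : ℝ) - 1 + (f + (m : ℝ) * g)) / m := by
                rw [hdval, hSg]; field_simp; ring
              rw [this] at hsum
              rw [div_le_one (by linarith)] at hsum
              linarith
            · have : (m : ℝ) * g = m • g := by simp
              rw [this]
              exact add_mem hfc.2 (AddSubmonoid.nsmul_mem _ hgc.2 m)
          · rw [hdval, hSg]; field_simp; ring
        · -- m ≥ 2 and M ≥ 2
          right
          have hm2' : (2 : ℝ) ≤ (m : ℝ) := by exact_mod_cast hm2
          have hM2' : (2 : ℝ) ≤ (M : ℝ) := by exact_mod_cast hM2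
          have hdhalf : (1 : ℝ) / 2 ≤ d := by
            rw [hdval, le_div_iff₀ (by linarith)]
            nlinarith [hf01.1]
          have hShalf : (1 : ℝ) / 2 ≤ t.sum := by
            rw [hSval, le_div_iff₀ (by linarith)]
            nlinarith [hg01.1]
          linarith
    · -- t.sum = 1
      right
      linarith

theorem D_of_D (I : Set ℝ) (hI : I ⊆ Set.Icc 0 1) :
    Dset (Dset I) = Dset I ∪ {1} := by
  ext x
  constructor
  · rintro ⟨⟨M, F, hM, hF, hxval⟩, hx1⟩
    have hM1 : (1 : ℝ) ≤ (M : ℝ) := by exact_mod_cast hM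
    obtain ⟨hF1, hFc⟩ := (mem_Iplus_iff _ F).1 hF
    obtain ⟨l, hl, hlsum⟩ := AddSubmonoid.exists_list_of_mem_closure hFc
    rcases DsetListSum hI l hl (by rw [hlsum]; exact hF1) with hFD | hFone
    · rw [hlsum] at hFD
      obtain ⟨⟨m, f, hm, hf, hFval⟩, _⟩ := hFD
      have hm1 : (1 : ℝ) ≤ (m : ℝ) := by exact_mod_cast hm
      left
      refine ⟨⟨M * m, f, Nat.mul_pos hM hm, hf, ?_⟩, hx1⟩
      rw [hxval, hFval]
      push_cast
      field_simp
      ring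
    · rw [hlsum] at hFone
      right
      rw [hxval, hFone]
      simp only [Set.mem_singleton_iff]
      field_simp
      ring
  · rintro (hx | hx)
    · have hx1 : x ≤ 1 := hx.2
      refine ⟨⟨1, x, one_pos, ?_, by norm_num⟩, Set.mem_Iic.2 hx1⟩
      rw [mem_Iplus_iff]
      exact ⟨hx1, AddSubmonoid.subset_closure hx⟩
    · simp only [Set.mem_singleton_iff] at hx
      subst hx
      have hhalf : (1 : ℝ) / 2 ∈ Dset I := by
        refine ⟨⟨2, 0, two_pos, Or.inr rfl, by norm_num⟩, Set.mem_Iic.2 (by norm_num)⟩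
      refine ⟨⟨1, 1, one_pos, ?_, by norm_num⟩, Set.mem_Iic.2 le_rfl⟩
      rw [mem_Iplus_iff]
      refine ⟨le_refl 1, ?_⟩
      have : (1 : ℝ) = 1 / 2 + 1 / 2 := by norm_num
      rw [this]
      exact add_mem (AddSubmonoid.subset_closure hhalf) (AddSubmonoid.subset_closure hhalf)
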